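/- For every CNF φ with n = |vars(φ)| variables and weight function w: vars(φ) → ℕ, there exists a CNF φ' whose variable set contains vars(φ) such that the number of satisfying assignments of φ' equals Σ_{β ⊨ φ} 2^{w(β)·(n+1)}, where the sum ranges over all satisfying assignments β of φ, and itw(φ') ≤ itw(φ) + 1. -/

import Mathlib

open scoped Classical

/-- A literal: a propositional variable (indexed by a natural number) or its negation. -/
structure Lit where
  var : ℕ
  pos : Bool
deriving DecidableEq

/-- A clause is a finite set of literals. -/
abbrev Clause := Finset Lit

/-- The variables occurring in a clause. -/
def Clause.varsOf (c : Clause) : Finset ℕ := c.image Lit.var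

/-- A weighted CNF: a finite set of clauses with weights in `ℕ ∪ {∞}`. -/
structure WCNF where
  clauses : Finset Clause
  weight : Clause → ℕ∞

/-- An assignment satisfies a literal. -/
def satLit (β : ℕ → Bool) (l : Lit) : Prop := β l.var = l.pos

/-- An assignment satisfies a clause if it makes some literal true. -/
def satClause (β : ℕ → Bool) (c : Clause) : Prop := ∃ l ∈ c, satLit β l

/-- The cost of an assignment: sum of the weights of the falsified clauses. -/
noncomputable def WCNF.costA (φ : WCNF) (β : ℕ → Bool) : ℕ∞ :=
  ∑ c ∈ φ.clauses.filter (fun c => ¬ satClause β c), φ.weight c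

/-- The cost of a WCNF: the minimum cost over all assignments. -/
noncomputable def WCNF.cost (φ : WCNF) : ℕ∞ := ⨅ β : ℕ → Bool, φ.costA β

/-- The variables of a set of clauses. -/
def cnfVars (C : Finset Clause) : Finset ℕ := C.biUnion Clause.varsOf

/-- The variables of a WCNF. -/
def WCNF.vars (φ : WCNF) : Finset ℕ := cnfVars φ.clauses

/-- The primal graph of a set of clauses: vertices are the variables (all of `ℕ`),
with an edge between distinct variables occurring together in a clause. -/
def primalOf (C : Finset Clause) : SimpleGraph ℕ :=
  SimpleGraph.fromRel (fun u v => ∃ c ∈ C, u ∈ c.varsOf ∧ v ∈ c.varsOf)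

/-- The incidence graph of a set of clauses: the bipartite graph on variables and
clauses joining each clause to the variables it contains. -/
def incOf (C : Finset Clause) : SimpleGraph (ℕ ⊕ Clause) :=
  SimpleGraph.fromRel (fun a b =>
    ∃ x c, a = Sum.inl x ∧ b = Sum.inr c ∧ c ∈ C ∧ x ∈ c.varsOf)

/-- A tree decomposition of a graph `G`: a tree `TG` together with finite bags such that
every vertex occurs in some bag, every edge is covered by a bag, and for each vertex the
nodes whose bags contain it induce a nonempty connected subgraph (hence a subtree). -/
structure TreeDecomp {V T : Type} (G : SimpleGraph V) (TG : SimpleGraph T) where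
  isTree : TG.IsTree
  bag : T → Finset V
  covers_vertex : ∀ v : V, ∃ t, v ∈ bag t
  covers_edge : ∀ u v : V, G.Adj u v → ∃ t, u ∈ bag t ∧ v ∈ bag t
  connected : ∀ v : V, (TG.induce {t | v ∈ bag t}).Connected

/-- `G` has a tree decomposition of width at most `k`. -/
def HasTD {V : Type} (G : SimpleGraph V) (k : ℕ) : Prop :=
  ∃ (T : Type) (TG : SimpleGraph T) (D : TreeDecomp G TG), ∀ t, (D.bag t).card ≤ k + 1

/-- The treewidth of a graph: the minimum width of a tree decomposition (`⊤` if none). -/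
noncomputable def tw {V : Type} (G : SimpleGraph V) : ℕ∞ :=
  sInf {x : ℕ∞ | ∃ k : ℕ, x = k ∧ HasTD G k}

/-- The primal treewidth of a WCNF. -/
noncomputable def WCNF.tw (φ : WCNF) : ℕ∞ := _root_.tw (primalOf φ.clauses)

/-- The incidence treewidth of a WCNF. -/
noncomputable def WCNF.itw (φ : WCNF) : ℕ∞ := _root_.tw (incOf φ.clauses)

/-- A (monotone) weighted CNF with integer weights. -/
structure ZWCNF where
  clauses : Finset Clause
  weight : Clause → ℤ

/-- Cost of an assignment for an integer-weighted CNF. -/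
noncomputable def ZWCNF.costA (φ : ZWCNF) (β : ℕ → Bool) : ℤ :=
  ∑ c ∈ φ.clauses.filter (fun c => ¬ satClause β c), φ.weight c

/-- `v` is the minimum cost of `φ`. -/
def ZWCNF.IsMinCost (φ : ZWCNF) (v : ℤ) : Prop :=
  (∃ β, φ.costA β = v) ∧ ∀ β, v ≤ φ.costA β

/-- A formula is monotone if every literal occurring in it is negative. -/
def ZWCNF.Mono (φ : ZWCNF) : Prop := ∀ c ∈ φ.clauses, ∀ l ∈ c, l.pos = false

noncomputable def ZWCNF.tw (φ : ZWCNF) : ℕ∞ := _root_.tw (primalOf φ.clauses)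

noncomputable def ZWCNF.itw (φ : ZWCNF) : ℕ∞ := _root_.tw (incOf φ.clauses)

/-- A QUBO instance: `H(x) = Σ_i lin i * x_i + Σ_{i<j} quad i j * x_i x_j`
with integer weights supported on a finite set of variables. -/
structure QUBO where
  vars : Finset ℕ
  lin : ℕ → ℤ
  quad : ℕ → ℕ → ℤ
  lin_supp : ∀ i, lin i ≠ 0 → i ∈ vars
  quad_supp : ∀ i j, quad i j ≠ 0 → i ∈ vars ∧ j ∈ vars
  quad_lt : ∀ i j, quad i j ≠ 0 → i < j

/-- Value of a Boolean, identifying `true` with `1` and `false` with `0`. -/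
def bval (b : Bool) : ℤ := if b then 1 else 0

/-- Evaluation of a QUBO Hamiltonian on a `{0,1}`-assignment. -/
def QUBO.eval (H : QUBO) (x : ℕ → Bool) : ℤ :=
  (∑ i ∈ H.vars, H.lin i * bval (x i)) +
    ∑ i ∈ H.vars, ∑ j ∈ H.vars, H.quad i j * bval (x i) * bval (x j)

/-- A ground state: an assignment minimizing `H`. -/
def QUBO.IsGround (H : QUBO) (x : ℕ → Bool) : Prop := ∀ y, H.eval x ≤ H.eval y

/-- `μ` is the minimum value of `H`. -/
def QUBO.IsMinVal (H : QUBO) (μ : ℤ) : Prop :=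
  (∃ x, H.eval x = μ) ∧ ∀ x, μ ≤ H.eval x

/-- The primal graph of a QUBO: an edge `{i,j}` whenever the quadratic weight is nonzero. -/
def QUBO.primal (H : QUBO) : SimpleGraph ℕ :=
  SimpleGraph.fromRel (fun i j => H.quad i j ≠ 0)

/-- The incidence graph of a QUBO: bipartite graph on variables and nonzero terms
(linear terms indexed by a variable, quadratic terms by a pair of variables). -/
def QUBO.inc (H : QUBO) : SimpleGraph (ℕ ⊕ (ℕ ⊕ ℕ × ℕ)) :=
  SimpleGraph.fromRel (fun a b =>
    (∃ i, a = Sum.inl i ∧ b = Sum.inr (Sum.inl i) ∧ H.lin i ≠ 0) ∨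
    (∃ x i j, a = Sum.inl x ∧ b = Sum.inr (Sum.inr (i, j)) ∧ H.quad i j ≠ 0 ∧ (x = i ∨ x = j)))

noncomputable def QUBO.tw (H : QUBO) : ℕ∞ := _root_.tw H.primal

noncomputable def QUBO.itw (H : QUBO) : ℕ∞ := _root_.tw H.inc

/-- An assignment satisfies an (unweighted) CNF if it satisfies every clause. -/
def satCNF (β : ℕ → Bool) (φ : Finset Clause) : Prop := ∀ c ∈ φ, satClause β c

/-- The weight of an assignment: the sum of weights of the variables set to true. -/
noncomputable def wOf (φ : Finset Clause) (w : ℕ → ℕ) (β : ℕ → Bool) : ℕ :=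
  ∑ x ∈ (cnfVars φ).filter (fun x => β x = true), w x

/-- The satisfying assignments of a CNF, represented as the subsets of its variable set
consisting of the variables set to true. -/
noncomputable def satSets (φ : Finset Clause) : Finset (Finset ℕ) :=
  (cnfVars φ).powerset.filter (fun S => ∀ c ∈ φ, ∃ l ∈ c, ((l.var ∈ S) ↔ l.pos = true))


namespace Stmt16Aux

section TreePart

variable {T P : Type}

/-- Extend a graph on `T` by pendant vertices indexed by `P`, vertex `p` attached at `s p`. -/
def extTree (TG : SimpleGraph T) (s : P → T) : SimpleGraph (T ⊕ P) :=
  SimpleGraph.fromRel (fun a b =>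
    (∃ t₁ t₂, a = Sum.inl t₁ ∧ b = Sum.inl t₂ ∧ TG.Adj t₁ t₂) ∨
    (∃ p, a = Sum.inl (s p) ∧ b = Sum.inr p))

variable {TG : SimpleGraph T} {s : P → T}

lemma extTree_adj_inl_inl {t t' : T} :
    (extTree TG s).Adj (Sum.inl t) (Sum.inl t') ↔ TG.Adj t t' := by
  simp only [extTree, SimpleGraph.fromRel_adj]
  constructor
  · rintro ⟨hne, (⟨t₁, t₂, h₁, h₂, h⟩ | ⟨p, h₁, h₂⟩) | (⟨t₁, t₂, h₁, h₂, h⟩ | ⟨p, h₁, h₂⟩)⟩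
    · simp_all
    · simp_all
    · simp only [Sum.inl.injEq] at h₁ h₂; subst h₁; subst h₂; exact h.symm
    · simp_all
  · intro h
    exact ⟨by simpa using h.ne, Or.inl (Or.inl ⟨t, t', rfl, rfl, h⟩)⟩

lemma extTree_adj_inl_inr {t : T} {p : P} :
    (extTree TG s).Adj (Sum.inl t) (Sum.inr p) ↔ t = s p := by
  simp only [extTree, SimpleGraph.fromRel_adj]
  constructor
  · rintro ⟨hne, (⟨t₁, t₂, h₁, h₂, h⟩ | ⟨q, h₁, h₂⟩) | (⟨t₁, t₂, h₁, h₂, h⟩ | ⟨q, h₁, h₂⟩)⟩ <;>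
      simp_all
  · rintro rfl
    exact ⟨by simp, Or.inl (Or.inr ⟨p, rfl, rfl⟩)⟩

lemma extTree_adj_inr {p : P} {b : T ⊕ P} (h : (extTree TG s).Adj (Sum.inr p) b) :
    b = Sum.inl (s p) := by
  rcases b with t | q
  · have := ((extTree TG s).adj_symm h)
    rw [extTree_adj_inl_inr] at this
    simp [this]
  · simp only [extTree, SimpleGraph.fromRel_adj] at h
    rcases h with ⟨hne, (⟨t₁, t₂, h₁, h₂, _⟩ | ⟨r, h₁, h₂⟩) | (⟨t₁, t₂, h₁, h₂, _⟩ | ⟨r, h₁, h₂⟩)⟩ <;>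
      simp_all

/-- the inclusion homomorphism -/
def inlHom (TG : SimpleGraph T) (s : P → T) : TG →g extTree TG s where
  toFun := Sum.inl
  map_rel' := fun h => extTree_adj_inl_inl.2 h

lemma inl_mem_support_of_walk_to_inr {p : P} :
    ∀ {a y : T ⊕ P} (W : (extTree TG s).Walk a y), y = Sum.inr p → ¬ W.Nil →
      Sum.inl (s p) ∈ W.support := by
  intro a y W
  induction W with
  | nil => intro _ h; exact absurd SimpleGraph.Walk.Nil.nil h
  | @cons u v w h q ih =>
    intro hy _
    subst hy
    by_cases hq : q.Nil
    · have hv : v = Sum.inr p := hq.eq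
      subst hv
      have := extTree_adj_inr ((extTree TG s).adj_symm h)
      subst this
      simp
    · simp [ih rfl hq]

lemma lift_walk :
    ∀ {x y : T ⊕ P} (q : (extTree TG s).Walk x y),
      (∀ z ∈ q.support, ∃ t, z = Sum.inl t) →
      ∃ (a b : T) (q' : TG.Walk a b) (hx : x = Sum.inl a) (hy : y = Sum.inl b),
        q = (q'.map (inlHom TG s)).copy hx.symm hy.symm := by
  intro x y q
  induction q with
  | nil =>
    intro h
    obtain ⟨a, rfl⟩ := h _ (SimpleGraph.Walk.start_mem_support _)
    exact ⟨a, a, SimpleGraph.Walk.nil, rfl, rfl, rfl⟩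
  | cons h q ih =>
    intro hall
    obtain ⟨b, b', q', hz, hy, heq⟩ := ih (fun z hz => hall z (by simp [hz]))
    subst hz; subst hy
    obtain ⟨a, rfl⟩ := hall _ (SimpleGraph.Walk.start_mem_support _)
    have hab : TG.Adj a b := extTree_adj_inl_inl.1 h
    refine ⟨a, b', SimpleGraph.Walk.cons hab q', rfl, rfl, ?_⟩
    simp only [SimpleGraph.Walk.map_cons, SimpleGraph.Walk.copy_rfl_rfl] at heq ⊢
    rw [heq]
    rfl

lemma no_cycle_inr (p : P) :
    ∀ (c : (extTree TG s).Walk (Sum.inr p) (Sum.inr p)), ¬ c.IsCycle := by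
  intro c hc
  have h3 := hc.three_le_length
  have hnodup := hc.support_nodup
  cases c with
  | nil => simp at h3
  | cons h q =>
    have hq := extTree_adj_inr h
    subst hq
    cases q with
    | cons h₂ q₂ =>
      have hq₂nil : ¬ q₂.Nil := by
        intro hnil
        have hlen : q₂.length = 0 := SimpleGraph.Walk.nil_iff_length_eq.1 hnil
        simp [SimpleGraph.Walk.length_cons, hlen] at h3
      have hmem2 := inl_mem_support_of_walk_to_inr q₂ rfl hq₂nil
      simp only [SimpleGraph.Walk.support_cons, List.tail_cons, List.nodup_cons] at hnodup
      exact hnodup.1 (by simp [hmem2])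

lemma extTree_isTree (hT : TG.IsTree) : (extTree TG s).IsTree := by
  constructor
  · -- connected
    have hne : Nonempty T := hT.isConnected.nonempty
    constructor
    · intro a b
      have key : ∀ c : T ⊕ P, (extTree TG s).Reachable c (Sum.inl (Sum.elim id s c)) := by
        rintro (t | p)
        · exact SimpleGraph.Reachable.refl _
        · exact (SimpleGraph.Adj.reachable (extTree_adj_inl_inr.2 rfl)).symm
      refine ((key a).trans ?_).trans (key b).symm
      exact SimpleGraph.Reachable.map (inlHom TG s) (hT.isConnected.preconnected _ _)
  · -- acyclic
    intro v c hc
    by_cases hmem : ∃ z ∈ c.support, ∃ p : P, z = Sum.inr p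
    · obtain ⟨z, hz, p, rfl⟩ := hmem
      exact no_cycle_inr p (c.rotate _ hz) (hc.rotate hz)
    · push_neg at hmem
      have hall : ∀ z ∈ c.support, ∃ t, z = Sum.inl t := by
        intro z hz
        rcases z with t | p
        · exact ⟨t, rfl⟩
        · exact absurd rfl (hmem _ hz p)
      obtain ⟨a, b, q', hx, hy, heq⟩ := lift_walk c hall
      have hab : a = b := by rw [hx] at hy; exact Sum.inl_injective hy
      subst hab
      subst heq
      have : (q'.map (inlHom TG s)).IsCycle := by
        have := hc
        subst hx
        exact this
      rw [SimpleGraph.Walk.map_isCycle_iff_of_injective Sum.inl_injective] at this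
      exact hT.IsAcyclic q' this


end TreePart

lemma connected_induce_singleton {V : Type} (G : SimpleGraph V) (a : V) :
    (G.induce {a}).Connected := by
  rw [SimpleGraph.connected_iff]
  refine ⟨fun u v => ?_, ⟨⟨a, rfl⟩⟩⟩
  have : u = v := Subtype.ext ((u.2 : (u : V) ∈ ({a} : Set V)).trans (v.2 : (v : V) ∈ ({a} : Set V)).symm)
  exact this ▸ SimpleGraph.Reachable.refl u

lemma induce_inl_image_connected {α β : Type} {G : SimpleGraph α} {H : SimpleGraph (α ⊕ β)}
    (hadj : ∀ a b : α, H.Adj (Sum.inl a) (Sum.inl b) ↔ G.Adj a b) (A : Set α)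
    (hA : (G.induce A).Connected) : (H.induce (Sum.inl '' A)).Connected := by
  refine (SimpleGraph.Iso.connected_iff ?_).1 hA
  refine ⟨Equiv.Set.image Sum.inl A Sum.inl_injective, ?_⟩
  intro x y
  simp [Equiv.Set.image, Equiv.Set.imageOfInjOn, hadj]

lemma hasTD_extend {V : Type} {G G' : SimpleGraph V} {P : Type}
    (ax ay ac : P → V) (R : Set V)
    (hR : R = {v | (∃ p, v = ay p) ∨ (∃ p, v = ac p)})
    (h1 : ∀ u v, G'.Adj u v → (G.Adj u v ∧ u ∉ R ∧ v ∉ R) ∨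
        (∃ p, (u = ax p ∨ u = ay p ∨ u = ac p) ∧ (v = ax p ∨ v = ay p ∨ v = ac p)))
    (hay : Function.Injective ay) (hac : Function.Injective ac)
    (hyc : ∀ p q, ay p ≠ ac q) (hxy : ∀ p q, ax p ≠ ay q) (hxc : ∀ p q, ax p ≠ ac q)
    (hedge : P → ∃ u v : V, G.Adj u v)
    {k : ℕ} (h : HasTD G k) : HasTD G' (k + 1) := by
  obtain ⟨T, TG, D, hw⟩ := h
  have hk : P → 1 ≤ k := by
    intro p
    obtain ⟨u, v, huv⟩ := hedge p
    obtain ⟨t, hu, hv⟩ := D.covers_edge u v huv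
    have h2 : ({u, v} : Finset V).card ≤ (D.bag t).card :=
      Finset.card_le_card (by intro z hz; simp at hz; rcases hz with rfl | rfl <;> assumption)
    rw [Finset.card_insert_of_notMem (by simp [huv.ne]), Finset.card_singleton] at h2
    have := (h2.trans (hw t))
    omega
  set s : P → T := fun p => (D.covers_vertex (ax p)).choose with hsdef
  have hs : ∀ p, ax p ∈ D.bag (s p) := fun p => (D.covers_vertex (ax p)).choose_spec
  set bag' : T ⊕ P → Finset V := Sum.elim (fun t => (D.bag t).filter (fun v => v ∉ R))
    (fun p => {ax p, ay p, ac p}) with hbag'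
  refine ⟨T ⊕ P, extTree TG s, ⟨extTree_isTree D.isTree, bag', ?_, ?_, ?_⟩, ?_⟩
  · -- covers_vertex
    intro v
    by_cases hv : v ∈ R
    · rw [hR] at hv
      rcases hv with ⟨p, rfl⟩ | ⟨p, rfl⟩
      · exact ⟨Sum.inr p, by simp [hbag']⟩
      · exact ⟨Sum.inr p, by simp [hbag']⟩
    · obtain ⟨t, ht⟩ := D.covers_vertex v
      exact ⟨Sum.inl t, by simp [hbag', Finset.mem_filter, ht, hv]⟩
  · -- covers_edge
    intro u v huv
    rcases h1 u v huv with ⟨hadj, hu, hv⟩ | ⟨p, hu, hv⟩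
    · obtain ⟨t, ht1, ht2⟩ := D.covers_edge u v hadj
      exact ⟨Sum.inl t, by simp [hbag', Finset.mem_filter, ht1, ht2, hu, hv]⟩
    · refine ⟨Sum.inr p, ?_, ?_⟩
      · rcases hu with rfl | rfl | rfl <;> simp [hbag']
      · rcases hv with rfl | rfl | rfl <;> simp [hbag']
  · -- connected
    intro v
    by_cases hv : v ∈ R
    · -- singleton
      rw [hR] at hv
      have hex : ∃ p, {t' | v ∈ bag' t'} = ({Sum.inr p} : Set (T ⊕ P)) := by
        rcases hv with ⟨p, rfl⟩ | ⟨p, rfl⟩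
        · refine ⟨p, ?_⟩
          ext t'
          rcases t' with t | q
          · simp only [Set.mem_setOf_eq, Set.mem_singleton_iff, hbag', Sum.elim_inl,
              Finset.mem_filter]
            constructor
            · rintro ⟨-, hnot⟩
              exact absurd (by rw [hR]; exact Or.inl ⟨p, rfl⟩) hnot
            · intro h; exact absurd h (by simp)
          · simp only [Set.mem_setOf_eq, Set.mem_singleton_iff, hbag', Sum.elim_inr,
              Finset.mem_insert, Finset.mem_singleton, Sum.inr.injEq]
            constructor
            · rintro (h | h | h)
              · exact absurd h.symm (hxy q p)
              · exact (hay h.symm)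
              · exact absurd h (hyc p q)
            · rintro rfl; simp
        · refine ⟨p, ?_⟩
          ext t'
          rcases t' with t | q
          · simp only [Set.mem_setOf_eq, Set.mem_singleton_iff, hbag', Sum.elim_inl,
              Finset.mem_filter]
            constructor
            · rintro ⟨-, hnot⟩
              exact absurd (by rw [hR]; exact Or.inr ⟨p, rfl⟩) hnot
            · intro h; exact absurd h (by simp)
          · simp only [Set.mem_setOf_eq, Set.mem_singleton_iff, hbag', Sum.elim_inr,
              Finset.mem_insert, Finset.mem_singleton, Sum.inr.injEq]
            constructor
            · rintro (h | h | h)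
              · exact absurd h.symm (hxc q p)
              · exact absurd h.symm (hyc q p)
              · exact (hac h.symm)
            · rintro rfl; simp
      obtain ⟨p, hset⟩ := hex
      rw [hset]
      exact connected_induce_singleton _ _
    · have hset : {t' | v ∈ bag' t'} =
          Sum.inl '' {t | v ∈ D.bag t} ∪ {t' | ∃ p, t' = Sum.inr p ∧ v = ax p} := by
        ext t'
        rcases t' with t | q
        · simp [hbag', Finset.mem_filter, hv]
        · constructor
          · intro hmem
            simp only [Set.mem_setOf_eq, hbag', Sum.elim_inr, Finset.mem_insert,
              Finset.mem_singleton] at hmem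
            rcases hmem with rfl | rfl | rfl
            · exact Or.inr ⟨q, rfl, rfl⟩
            · exact absurd (by rw [hR]; exact Or.inl ⟨q, rfl⟩) hv
            · exact absurd (by rw [hR]; exact Or.inr ⟨q, rfl⟩) hv
          · rintro (⟨t, _, ht⟩ | ⟨p, hp, rfl⟩)
            · exact absurd ht (by simp)
            · simp only [Sum.inr.injEq] at hp
              subst hp
              simp [hbag']
      rw [hset]
      obtain ⟨t₀, ht₀⟩ := D.covers_vertex v
      have hbase : Sum.inl t₀ ∈ Sum.inl '' {t | v ∈ D.bag t} ∪
          {t' | ∃ p, t' = Sum.inr p ∧ v = ax p} := Or.inl ⟨t₀, ht₀, rfl⟩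
      have holdconn : ((extTree TG s).induce (Sum.inl '' {t | v ∈ D.bag t})).Connected :=
        induce_inl_image_connected (fun a b => extTree_adj_inl_inl) _ (D.connected v)
      apply SimpleGraph.induce_connected_of_patches (Sum.inl t₀) hbase
      intro z hz
      rcases hz with ⟨t, ht, rfl⟩ | ⟨q, rfl, hq⟩
      · refine ⟨Sum.inl '' {t | v ∈ D.bag t}, Set.subset_union_left, ⟨t₀, ht₀, rfl⟩, ⟨t, ht, rfl⟩, ?_⟩
        exact holdconn.preconnected _ _
      · refine ⟨Sum.inl '' {t | v ∈ D.bag t} ∪ {Sum.inr q},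
          Set.union_subset_union_right _ (by rintro _ rfl; exact ⟨q, rfl, hq⟩),
          Or.inl ⟨t₀, ht₀, rfl⟩, Or.inr rfl, ?_⟩
        have hconn2 : ((extTree TG s).induce (Sum.inl '' {t | v ∈ D.bag t} ∪ {Sum.inr q})).Connected := by
          refine SimpleGraph.connected_induce_union holdconn.preconnected
            (connected_induce_singleton _ _).preconnected (⟨s q, ?_, rfl⟩) rfl ?_
          · rw [hq]; exact hs q
          · exact extTree_adj_inl_inr.2 rfl
        exact hconn2.preconnected _ _
  · -- width
    rintro (t | p)
    · simp only [hbag', Sum.elim_inl]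
      exact le_trans (Finset.card_filter_le _ _) (le_trans (hw t) (by omega))
    · simp only [hbag', Sum.elim_inr]
      have h3 : ({ax p, ay p, ac p} : Finset V).card ≤ 3 := by
        apply le_trans (Finset.card_insert_le _ _)
        have := Finset.card_insert_le (ay p) ({ac p} : Finset V)
        simp at this ⊢
        omega
      exact le_trans h3 (by have := hk p; omega)

lemma tw_le_tw_add_one {V : Type} {G G' : SimpleGraph V}
    (hmono : ∀ k : ℕ, HasTD G k → HasTD G' (k + 1)) : tw G' ≤ tw G + 1 := by
  by_cases hS : ∃ k : ℕ, HasTD G k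
  · have hne : {k : ℕ | HasTD G k}.Nonempty := hS
    have hmem : HasTD G (sInf {k : ℕ | HasTD G k}) := Nat.sInf_mem hne
    have h1 : tw G' ≤ ((sInf {k : ℕ | HasTD G k} : ℕ) : ℕ∞) + 1 := by
      have h2 : tw G' ≤ ((sInf {k : ℕ | HasTD G k} + 1 : ℕ) : ℕ∞) :=
        sInf_le ⟨_, rfl, hmono _ hmem⟩
      simpa using h2
    have h2 : ((sInf {k : ℕ | HasTD G k} : ℕ) : ℕ∞) ≤ tw G := by
      apply le_sInf
      rintro x ⟨k, rfl, hk⟩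
      exact_mod_cast Nat.sInf_le hk
    exact h1.trans (by gcongr)
  · have hempty : {x : ℕ∞ | ∃ k : ℕ, x = k ∧ HasTD G k} = ∅ := by
      ext x
      simp only [Set.mem_setOf_eq, Set.mem_empty_iff_false, iff_false]
      rintro ⟨k, rfl, hk⟩
      exact hS ⟨k, hk⟩
    have : tw G = ⊤ := by rw [tw, hempty, sInf_empty]
    rw [this]
    simp


section CNFPart

variable (φ : Finset Clause) (w : ℕ → ℕ)

noncomputable def wk (x : ℕ) : ℕ := w x * ((cnfVars φ).card + 1)

noncomputable def fresh (x i : ℕ) : ℕ := (cnfVars φ).sup id + 1 + Nat.pair x i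

lemma fresh_not_mem (x i : ℕ) : fresh φ x i ∉ cnfVars φ := by
  intro h
  have := Finset.le_sup (f := id) h
  simp only [id] at this
  simp only [fresh] at this
  omega

lemma fresh_inj {x i x' i' : ℕ} (h : fresh φ x i = fresh φ x' i') : x = x' ∧ i = i' := by
  simp only [fresh] at h
  exact Nat.pair_eq_pair.1 (Nat.add_left_cancel h)

noncomputable def newC (x i : ℕ) : Clause := {⟨fresh φ x i, false⟩, ⟨x, true⟩}

lemma varsOf_newC (x i : ℕ) : (newC φ x i).varsOf = {fresh φ x i, x} := by
  simp [newC, Clause.varsOf, Finset.image_insert]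

lemma mem_cnfVars {C : Finset Clause} {x : ℕ} :
    x ∈ cnfVars C ↔ ∃ c ∈ C, x ∈ c.varsOf := by
  simp [cnfVars]

lemma newC_inj {x i x' i' : ℕ} (h : newC φ x i = newC φ x' i') : x = x' ∧ i = i' := by
  have hmem : (⟨fresh φ x i, false⟩ : Lit) ∈ newC φ x' i' := by
    rw [← h]; simp [newC]
  simp only [newC, Finset.mem_insert, Finset.mem_singleton, Lit.mk.injEq] at hmem
  rcases hmem with ⟨h1, -⟩ | ⟨-, h2⟩
  · exact fresh_inj φ h1
  · simp at h2

lemma newC_not_mem (x i : ℕ) : newC φ x i ∉ φ := by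
  intro h
  exact fresh_not_mem φ x i (mem_cnfVars.2 ⟨_, h, by rw [varsOf_newC]; simp⟩)

noncomputable def newCs : Finset Clause :=
  (cnfVars φ).biUnion (fun x => (Finset.range (wk φ w x)).image (fun i => newC φ x i))

lemma mem_newCs {c : Clause} :
    c ∈ newCs φ w ↔ ∃ x ∈ cnfVars φ, ∃ i < wk φ w x, c = newC φ x i := by
  simp only [newCs, Finset.mem_biUnion, Finset.mem_image, Finset.mem_range]
  constructor
  · rintro ⟨x, hx, i, hi, rfl⟩; exact ⟨x, hx, i, hi, rfl⟩
  · rintro ⟨x, hx, i, hi, rfl⟩; exact ⟨x, hx, i, hi, rfl⟩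

noncomputable def phi' : Finset Clause := φ ∪ newCs φ w

lemma subset_vars_phi' : cnfVars φ ⊆ cnfVars (phi' φ w) := by
  intro x hx
  obtain ⟨c, hc, hxc⟩ := mem_cnfVars.1 hx
  exact mem_cnfVars.2 ⟨c, Finset.mem_union_left _ hc, hxc⟩

noncomputable def Y (S : Finset ℕ) : Finset ℕ :=
  S.biUnion (fun x => (Finset.range (wk φ w x)).image (fun i => fresh φ x i))

lemma mem_Y {S : Finset ℕ} {z : ℕ} :
    z ∈ Y φ w S ↔ ∃ x ∈ S, ∃ i < wk φ w x, z = fresh φ x i := by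
  simp only [Y, Finset.mem_biUnion, Finset.mem_image, Finset.mem_range]
  constructor
  · rintro ⟨x, hx, i, hi, rfl⟩; exact ⟨x, hx, i, hi, rfl⟩
  · rintro ⟨x, hx, i, hi, rfl⟩; exact ⟨x, hx, i, hi, rfl⟩

lemma Y_not_mem_vars {S : Finset ℕ} {z : ℕ} (hz : z ∈ Y φ w S) : z ∉ cnfVars φ := by
  obtain ⟨x, -, i, -, rfl⟩ := (mem_Y φ w).1 hz
  exact fresh_not_mem φ x i

lemma mem_satSets {C : Finset Clause} {T : Finset ℕ} :
    T ∈ satSets C ↔ T ⊆ cnfVars C ∧ ∀ c ∈ C, ∃ l ∈ c, ((l.var ∈ T) ↔ l.pos = true) := by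
  simp [satSets, Finset.mem_filter, Finset.mem_powerset]

lemma satSets_phi' :
    satSets (phi' φ w) =
      (satSets φ).biUnion (fun S => (Y φ w S).powerset.image (fun B => S ∪ B)) := by
  ext A
  simp only [Finset.mem_biUnion, Finset.mem_image, Finset.mem_powerset]
  constructor
  · intro hA
    obtain ⟨hsub, hsat⟩ := mem_satSets.1 hA
    refine ⟨A ∩ cnfVars φ, ?_, A \ cnfVars φ, ?_, ?_⟩
    · refine mem_satSets.2 ⟨Finset.inter_subset_right, ?_⟩
      intro c hc
      obtain ⟨l, hl, hiff⟩ := hsat c (Finset.mem_union_left _ hc)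
      refine ⟨l, hl, ?_⟩
      have hlv : l.var ∈ cnfVars φ :=
        mem_cnfVars.2 ⟨c, hc, Finset.mem_image.2 ⟨l, hl, rfl⟩⟩
      rw [← hiff]
      simp [Finset.mem_inter, hlv]
    · -- A \ cnfVars φ ⊆ Y (A ∩ cnfVars φ)
      intro b hb
      obtain ⟨hbA, hbn⟩ := Finset.mem_sdiff.1 hb
      obtain ⟨c, hc, hbc⟩ := mem_cnfVars.1 (hsub hbA)
      rcases Finset.mem_union.1 hc with hcφ | hcnew
      · exact absurd (mem_cnfVars.2 ⟨c, hcφ, hbc⟩) hbn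
      · obtain ⟨x, hx, i, hi, rfl⟩ := (mem_newCs φ w).1 hcnew
        rw [varsOf_newC] at hbc
        simp only [Finset.mem_insert, Finset.mem_singleton] at hbc
        rcases hbc with rfl | rfl
        · -- b = fresh x i : show x ∈ A ∩ cnfVars φ
          obtain ⟨l, hl, hiff⟩ := hsat _ (Finset.mem_union_right _ hcnew)
          simp only [newC, Finset.mem_insert, Finset.mem_singleton] at hl
          rcases hl with rfl | rfl
          · simp only [Bool.false_eq_true, iff_false] at hiff
            exact absurd hbA hiff
          · simp only [iff_true] at hiff
            exact (mem_Y φ w).2 ⟨x, Finset.mem_inter.2 ⟨hiff, hx⟩, i, hi, rfl⟩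
        · exact absurd hx hbn
    · ext z
      simp only [Finset.mem_union, Finset.mem_inter, Finset.mem_sdiff]
      tauto
  · rintro ⟨S, hS, B, hB, rfl⟩
    obtain ⟨hSsub, hSsat⟩ := mem_satSets.1 hS
    have hBn : ∀ z ∈ B, z ∉ cnfVars φ := fun z hz => Y_not_mem_vars φ w (hB hz)
    refine mem_satSets.2 ⟨?_, ?_⟩
    · intro z hz
      rcases Finset.mem_union.1 hz with hzS | hzB
      · exact subset_vars_phi' φ w (hSsub hzS)
      · obtain ⟨x, hx, i, hi, rfl⟩ := (mem_Y φ w).1 (hB hzB)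
        refine mem_cnfVars.2 ⟨newC φ x i, Finset.mem_union_right _
          ((mem_newCs φ w).2 ⟨x, hSsub hx, i, hi, rfl⟩), ?_⟩
        rw [varsOf_newC]; simp
    · intro c hc
      rcases Finset.mem_union.1 hc with hcφ | hcnew
      · obtain ⟨l, hl, hiff⟩ := hSsat c hcφ
        refine ⟨l, hl, ?_⟩
        have hlv : l.var ∈ cnfVars φ :=
          mem_cnfVars.2 ⟨c, hcφ, Finset.mem_image.2 ⟨l, hl, rfl⟩⟩
        rw [← hiff]
        simp only [Finset.mem_union]
        constructor
        · rintro (h | h)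
          · exact h
          · exact absurd hlv (hBn _ h)
        · exact Or.inl
      · obtain ⟨x, hx, i, hi, rfl⟩ := (mem_newCs φ w).1 hcnew
        by_cases hxT : x ∈ S ∪ B
        · exact ⟨⟨x, true⟩, by simp [newC], by simpa using hxT⟩
        · refine ⟨⟨fresh φ x i, false⟩, by simp [newC], ?_⟩
          simp only [Bool.false_eq_true, iff_false]
          intro hfT
          rcases Finset.mem_union.1 hfT with hfS | hfB
          · exact fresh_not_mem φ x i (hSsub hfS)
          · obtain ⟨x', hx', i', hi', heq⟩ := (mem_Y φ w).1 (hB hfB)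
            obtain ⟨rfl, rfl⟩ := fresh_inj φ heq
            exact hxT (Finset.mem_union_left _ hx')

lemma card_Y {S : Finset ℕ} (_hS : S ⊆ cnfVars φ) :
    (Y φ w S).card = (∑ x ∈ S, w x) * ((cnfVars φ).card + 1) := by
  rw [Finset.sum_mul]
  rw [Y, Finset.card_biUnion]
  · refine Finset.sum_congr rfl (fun x hx => ?_)
    rw [Finset.card_image_of_injective _ (fun i i' h => (fresh_inj φ h).2),
      Finset.card_range, wk]
  · intro x hx x' hx' hne
    simp only [Finset.disjoint_left]
    intro z hz hz'
    obtain ⟨i, -, rfl⟩ := Finset.mem_image.1 hz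
    obtain ⟨i', -, heq⟩ := Finset.mem_image.1 hz'
    exact hne ((fresh_inj φ heq.symm).1)

lemma card_satSets_phi' :
    (satSets (phi' φ w)).card =
      ∑ S ∈ satSets φ, 2 ^ ((∑ x ∈ S, w x) * ((cnfVars φ).card + 1)) := by
  rw [satSets_phi']
  have hScnf : ∀ S ∈ satSets φ, S ⊆ cnfVars φ := fun S hS => (mem_satSets.1 hS).1
  have hkey : ∀ S ∈ satSets φ, ∀ B ∈ (Y φ w S).powerset, (S ∪ B) ∩ cnfVars φ = S := by
    intro S hS B hB
    ext z
    simp only [Finset.mem_inter, Finset.mem_union]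
    constructor
    · rintro ⟨hz | hz, hzc⟩
      · exact hz
      · exact absurd hzc (Y_not_mem_vars φ w (Finset.mem_powerset.1 hB hz))
    · intro hz
      exact ⟨Or.inl hz, hScnf S hS hz⟩
  rw [Finset.card_biUnion]
  · refine Finset.sum_congr rfl (fun S hS => ?_)
    rw [Finset.card_image_of_injOn, Finset.card_powerset, card_Y φ w (hScnf S hS)]
    intro B hB B' hB' heq
    replace hB := Finset.mem_coe.1 hB
    replace hB' := Finset.mem_coe.1 hB'
    simp only at heq
    have hd : ∀ C ∈ (Y φ w S).powerset, (S ∪ C) \ cnfVars φ = C := by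
      intro C hC
      ext z
      simp only [Finset.mem_sdiff, Finset.mem_union]
      constructor
      · rintro ⟨hz | hz, hzc⟩
        · exact absurd (hScnf S hS hz) hzc
        · exact hz
      · intro hz
        exact ⟨Or.inr hz, Y_not_mem_vars φ w (Finset.mem_powerset.1 hC hz)⟩
    rw [← hd B hB, ← hd B' hB', heq]
  · intro S hS S' hS' hne
    simp only [Finset.disjoint_left]
    intro A hA hA'
    obtain ⟨B, hB, rfl⟩ := Finset.mem_image.1 hA
    obtain ⟨B', hB', heq⟩ := Finset.mem_image.1 hA'
    exact hne (by rw [← hkey S hS B hB, ← hkey S' hS' B' hB', heq])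

end CNFPart

section GraphApp

variable (φ : Finset Clause) (w : ℕ → ℕ)

lemma incOf_adj {C : Finset Clause} {a b : ℕ ⊕ Clause} :
    (incOf C).Adj a b ↔ ∃ x c, c ∈ C ∧ x ∈ c.varsOf ∧
      ((a = Sum.inl x ∧ b = Sum.inr c) ∨ (a = Sum.inr c ∧ b = Sum.inl x)) := by
  simp only [incOf, SimpleGraph.fromRel_adj]
  constructor
  · rintro ⟨hne, ⟨x, c, rfl, rfl, hc, hx⟩ | ⟨x, c, rfl, rfl, hc, hx⟩⟩
    · exact ⟨x, c, hc, hx, Or.inl ⟨rfl, rfl⟩⟩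
    · exact ⟨x, c, hc, hx, Or.inr ⟨rfl, rfl⟩⟩
  · rintro ⟨x, c, hc, hx, ⟨rfl, rfl⟩ | ⟨rfl, rfl⟩⟩
    · exact ⟨by simp, Or.inl ⟨x, c, rfl, rfl, hc, hx⟩⟩
    · exact ⟨by simp, Or.inr ⟨x, c, rfl, rfl, hc, hx⟩⟩

lemma notR {z : ℕ ⊕ Clause}
    (hz : (∃ x ∈ cnfVars φ, z = Sum.inl x) ∨ (∃ c ∈ φ, z = Sum.inr c)) :
    ¬ ((∃ p : {p : ℕ × ℕ // p.1 ∈ cnfVars φ ∧ p.2 < wk φ w p.1},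
          z = Sum.inl (fresh φ p.1.1 p.1.2)) ∨
       (∃ p : {p : ℕ × ℕ // p.1 ∈ cnfVars φ ∧ p.2 < wk φ w p.1},
          z = Sum.inr (newC φ p.1.1 p.1.2))) := by
  rintro (⟨p, rfl⟩ | ⟨p, rfl⟩)
  · rcases hz with ⟨x, hx, heq⟩ | ⟨c, hc, heq⟩
    · simp only [Sum.inl.injEq] at heq
      exact fresh_not_mem φ p.1.1 p.1.2 (heq ▸ hx)
    · simp at heq
  · rcases hz with ⟨x, hx, heq⟩ | ⟨c, hc, heq⟩
    · simp at heq
    · simp only [Sum.inr.injEq] at heq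
      exact newC_not_mem φ p.1.1 p.1.2 (heq ▸ hc)

lemma tw_phi' : tw (incOf (phi' φ w)) ≤ tw (incOf φ) + 1 := by
  apply tw_le_tw_add_one
  intro k hk
  refine hasTD_extend
    (P := {p : ℕ × ℕ // p.1 ∈ cnfVars φ ∧ p.2 < wk φ w p.1})
    (fun p => Sum.inl p.1.1)
    (fun p => Sum.inl (fresh φ p.1.1 p.1.2))
    (fun p => Sum.inr (newC φ p.1.1 p.1.2))
    _ rfl ?_ ?_ ?_ ?_ ?_ ?_ ?_ hk
  · -- h1
    intro u v huv
    obtain ⟨x, c, hc, hx, hshape⟩ := incOf_adj.1 huv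
    rcases Finset.mem_union.1 hc with hcφ | hcnew
    · refine Or.inl ⟨incOf_adj.2 ⟨x, c, hcφ, hx, hshape⟩, ?_, ?_⟩
      · intro hu
        refine notR φ w ?_ hu
        rcases hshape with ⟨rfl, -⟩ | ⟨rfl, -⟩
        · exact Or.inl ⟨x, mem_cnfVars.2 ⟨c, hcφ, hx⟩, rfl⟩
        · exact Or.inr ⟨c, hcφ, rfl⟩
      · intro hv
        refine notR φ w ?_ hv
        rcases hshape with ⟨-, rfl⟩ | ⟨-, rfl⟩
        · exact Or.inr ⟨c, hcφ, rfl⟩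
        · exact Or.inl ⟨x, mem_cnfVars.2 ⟨c, hcφ, hx⟩, rfl⟩
    · obtain ⟨x₀, hx₀, i, hi, rfl⟩ := (mem_newCs φ w).1 hcnew
      refine Or.inr ⟨⟨(x₀, i), hx₀, hi⟩, ?_⟩
      rw [varsOf_newC] at hx
      simp only [Finset.mem_insert, Finset.mem_singleton] at hx
      rcases hshape with ⟨rfl, rfl⟩ | ⟨rfl, rfl⟩ <;> rcases hx with rfl | rfl
      · exact ⟨Or.inr (Or.inl rfl), Or.inr (Or.inr rfl)⟩
      · exact ⟨Or.inl rfl, Or.inr (Or.inr rfl)⟩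
      · exact ⟨Or.inr (Or.inr rfl), Or.inr (Or.inl rfl)⟩
      · exact ⟨Or.inr (Or.inr rfl), Or.inl rfl⟩
  · -- hay injective
    intro p q h
    simp only [Sum.inl.injEq] at h
    obtain ⟨h1, h2⟩ := fresh_inj φ h
    exact Subtype.ext (Prod.ext h1 h2)
  · -- hac injective
    intro p q h
    simp only [Sum.inr.injEq] at h
    obtain ⟨h1, h2⟩ := newC_inj φ h
    exact Subtype.ext (Prod.ext h1 h2)
  · intro p q; simp
  · -- hxy
    intro p q
    simp only [ne_eq, Sum.inl.injEq]
    intro h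
    exact fresh_not_mem φ q.1.1 q.1.2 (h ▸ p.2.1)
  · intro p q; simp
  · -- hedge
    intro p
    obtain ⟨c, hc, hxc⟩ := mem_cnfVars.1 p.2.1
    exact ⟨Sum.inl p.1.1, Sum.inr c,
      incOf_adj.2 ⟨p.1.1, c, hc, hxc, Or.inl ⟨rfl, rfl⟩⟩⟩

end GraphApp

end Stmt16Aux

/-- for a CNF `φ` with `n` variables and arbitrary natural variable weights
`w`, there is a CNF `φ'` (whose variables include those of `φ`) whose number of
satisfying assignments equals `Σ_{β ⊨ φ} 2^{w(β)·(n+1)}`, with `itw φ' ≤ itw φ + 1`. -/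
theorem stmt16 (φ : Finset Clause) (w : ℕ → ℕ) :
    ∃ φ' : Finset Clause,
      cnfVars φ ⊆ cnfVars φ' ∧
      (satSets φ').card =
        ∑ S ∈ satSets φ, 2 ^ ((∑ x ∈ S, w x) * ((cnfVars φ).card + 1)) ∧
      tw (incOf φ') ≤ tw (incOf φ) + 1 := by
  refine ⟨Stmt16Aux.phi' φ w, Stmt16Aux.subset_vars_phi' φ w,
    Stmt16Aux.card_satSets_phi' φ w, Stmt16Aux.tw_phi' φ w⟩
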